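/- Let β > 1 be an algebraic integer of degree d+1 (d ≥ 1) with minimal polynomial X^{d+1} + b_d X^d + ⋯ + b_1 X + b_0 over ℤ, and define r = (r_0,…,r_{d-1}) ∈ ℝ^d by the factorization X^{d+1} + b_d X^d + ⋯ + b_0 = (X − β)(X^d + r_{d-1}X^{d-1} + ⋯ + r_0). Then for every z ∈ ℤ^d one has {r·τ_r(z)} = T_β({r·z}), and the map Φ_r : ℤ^d → ℤ[β] ∩ [0,1), z ↦ {r·z}, is a bijection; in particular the restriction of the beta-transformation T_β to ℤ[β] ∩ [0,1) is conjugate to τ_r. -/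

import Mathlib

open Polynomial Finset

-- helper: coefficient of a Fin-indexed sum of C c_i X^i
lemma aux_coeff_fin {α : Type*} [Semiring α] (n : ℕ) (c : Fin n → α) (k : ℕ) :
    (∑ i : Fin n, C (c i) * X ^ (i:ℕ)).coeff k = if h : k < n then c ⟨k, h⟩ else 0 := by
  rw [finset_sum_coeff]
  simp only [coeff_C_mul, coeff_X_pow]
  split
  · rename_i h
    rw [Finset.sum_eq_single (⟨k, h⟩ : Fin n)]
    · simp
    · intro i _ hne
      have : ¬ (k = (i:ℕ)) := fun hh => hne (by ext; simp [hh.symm])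
      simp [this]
    · simp
  · rename_i h
    apply Finset.sum_eq_zero
    intro i _
    have : ¬ (k = (i:ℕ)) := fun hh => h (hh ▸ i.isLt)
    simp [this]

lemma aux_coeff_range {α : Type*} [Semiring α] (n : ℕ) (c : ℕ → α) (k : ℕ) :
    (∑ m ∈ Finset.range n, C (c m) * X ^ m).coeff k = if k < n then c k else 0 := by
  rw [finset_sum_coeff]
  simp only [coeff_C_mul, coeff_X_pow]
  split
  · rename_i h
    rw [Finset.sum_eq_single k]
    · simp
    · intro i _ hne
      have : ¬ (k = i) := fun hh => hne hh.symm
      simp [this]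
    · simp_all
  · rename_i h
    apply Finset.sum_eq_zero
    intro i hi
    have : ¬ (k = i) := fun hh => h (hh ▸ Finset.mem_range.mp hi)
    simp [this]



open Polynomial

/-- The shift radix system `τ_r : ℤ^d → ℤ^d`. -/
noncomputable def srsMap (d : ℕ) (r : Fin d → ℝ) (z : Fin d → ℤ) : Fin d → ℤ :=
  fun i =>
    if h : (i : ℕ) + 1 < d then z ⟨(i : ℕ) + 1, h⟩
    else -⌊∑ j, r j * (z j : ℝ)⌋

/-- The beta-transformation `T_β(γ) = βγ - ⌊βγ⌋`. -/
noncomputable def betaT (β : ℝ) (x : ℝ) : ℝ := Int.fract (β * x)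

/-- for an algebraic integer `β > 1` with minimal polynomial
`X^{d+1} + b_d X^d + ⋯ + b_0` and `r` defined by
`X^{d+1} + b_d X^d + ⋯ + b_0 = (X-β)(X^d + r_{d-1}X^{d-1} + ⋯ + r_0)`, we have
`{r·τ_r(z)} = T_β({r·z})` for all `z ∈ ℤ^d`, and `Φ_r : z ↦ {r·z}` is a bijection
from `ℤ^d` onto `ℤ[β] ∩ [0,1)`; in particular `T_β` restricted to `ℤ[β] ∩ [0,1)`
is conjugate to `τ_r`. -/
theorem srs_beta_conjugacy (d : ℕ) (hd : 1 ≤ d) (β : ℝ) (hβ : 1 < β)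
    (hint : IsIntegral ℤ β) (b : Fin (d + 1) → ℤ)
    (hmin : minpoly ℤ β
      = X ^ (d + 1) + ∑ i : Fin (d + 1), C (b i) * X ^ (i : ℕ))
    (r : Fin d → ℝ)
    (hfac : (X ^ (d + 1) + ∑ i : Fin (d + 1), C ((b i : ℝ)) * X ^ (i : ℕ))
      = (X - C β) * (X ^ d + ∑ i : Fin d, C (r i) * X ^ (i : ℕ))) :
    (∀ z : Fin d → ℤ,
        Int.fract (∑ j, r j * ((srsMap d r z) j : ℝ))
          = betaT β (Int.fract (∑ j, r j * (z j : ℝ))))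
    ∧ Set.BijOn (fun z : Fin d → ℤ => Int.fract (∑ j, r j * (z j : ℝ)))
        Set.univ ({x : ℝ | x ∈ Subring.closure ({β} : Set ℝ)} ∩ Set.Ico 0 1) := by
  classical
  set P : ℝ[X] := X ^ (d + 1) + ∑ i : Fin (d + 1), C ((b i : ℝ)) * X ^ (i : ℕ) with hPdef
  set Q : ℝ[X] := X ^ d + ∑ i : Fin d, C (r i) * X ^ (i : ℕ) with hQdef
  set R : ℕ → ℝ := fun k => Q.coeff k with hRdef
  set B : ℕ → ℤ := fun k => if h : k < d + 1 then b ⟨k, h⟩ else 0 with hBdef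
  have hQc : ∀ k, Q.coeff k = (if k = d then 1 else 0) + (if h : k < d then r ⟨k, h⟩ else 0) := by
    intro k
    rw [hQdef, coeff_add, coeff_X_pow, aux_coeff_fin]
  have hRlt : ∀ (k : ℕ) (h : k < d), R k = r ⟨k, h⟩ := by
    intro k h
    show Q.coeff k = _
    rw [hQc k, if_neg (Nat.ne_of_lt h), dif_pos h, zero_add]
  have hRd : R d = 1 := by
    show Q.coeff d = 1
    rw [hQc d, if_pos rfl, dif_neg (lt_irrefl d), add_zero]
  have hPc : ∀ k, P.coeff k
      = (if k = d + 1 then 1 else 0) + ((B k : ℤ) : ℝ) := by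
    intro k
    rw [hPdef, coeff_add, coeff_X_pow, aux_coeff_fin, hBdef]
    congr 1
    split
    · rename_i h
      simp only [dif_pos h]
    · rename_i h
      simp only [dif_neg h, Int.cast_zero]
  have hrel : ∀ k, P.coeff (k + 1) = R k - β * R (k + 1) := by
    intro k
    calc P.coeff (k+1) = ((X - C β) * Q).coeff (k+1) := by rw [hfac]
    _ = (X * Q).coeff (k+1) - (C β * Q).coeff (k+1) := by rw [sub_mul, coeff_sub]
    _ = R k - β * R (k+1) := by rw [coeff_X_mul, coeff_C_mul]
  have hrel0 : P.coeff 0 = -(β * R 0) := by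
    calc P.coeff 0 = ((X - C β) * Q).coeff 0 := by rw [hfac]
    _ = (X * Q).coeff 0 - (C β * Q).coeff 0 := by rw [sub_mul, coeff_sub]
    _ = -(β * R 0) := by
        rw [mul_coeff_zero, coeff_X_zero, coeff_C_mul, zero_mul, zero_sub]
  have hstep : ∀ k, k < d → R k = β * R (k + 1) + (B (k + 1) : ℝ) := by
    intro k hk
    have h1 := hrel k
    rw [hPc (k + 1), if_neg (by omega), zero_add] at h1
    linarith
  have hR0 : β * R 0 = -(B 0 : ℝ) := by
    have h1 := hrel0
    rw [hPc 0, if_neg (by omega), zero_add] at h1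
    linarith
  have hRd1 : R (d - 1) = β + (B d : ℝ) := by
    have h1 := hstep (d - 1) (by omega)
    rw [Nat.sub_add_cancel hd, hRd, mul_one] at h1
    exact h1
  obtain ⟨e, hde⟩ : ∃ e, d = e + 1 := ⟨d - 1, (Nat.succ_pred_eq_of_pos hd).symm⟩
  have hRe : R e = β + (B d : ℝ) := by
    have : e = d - 1 := by omega
    rw [this]; exact hRd1
  have key : ∀ z : Fin d → ℤ, ∃ m : ℤ,
      (∑ j, r j * ((srsMap d r z) j : ℝ))
        = β * Int.fract (∑ j, r j * (z j : ℝ)) + m := by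
    intro z
    set σ : ℝ := ∑ j, r j * (z j : ℝ) with hσdef
    set zint : ℕ → ℤ := fun j => if h : j < d then z ⟨j, h⟩ else 0 with hzint
    have hσ : σ = ∑ j ∈ range d, R j * (zint j : ℝ) := by
      rw [hσdef, ← Fin.sum_univ_eq_sum_range (fun j => R j * (zint j : ℝ)) d]
      apply Finset.sum_congr rfl
      intro i _
      have h1 : zint (i : ℕ) = z i := by simp [hzint, i.isLt]
      rw [hRlt _ i.isLt, h1]
    set w : ℕ → ℝ := fun j => if h : j + 1 < d then ((z ⟨j + 1, h⟩ : ℤ) : ℝ)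
      else ((-⌊σ⌋ : ℤ) : ℝ) with hw
    have hτ : (∑ j, r j * ((srsMap d r z) j : ℝ))
        = ∑ i ∈ range e, R i * (zint (i + 1) : ℝ) + R e * ((-⌊σ⌋ : ℤ) : ℝ) := by
      have step1 : (∑ j, r j * ((srsMap d r z) j : ℝ)) = ∑ j ∈ range d, R j * w j := by
        rw [← Fin.sum_univ_eq_sum_range (fun j => R j * w j) d]
        apply Finset.sum_congr rfl
        intro i _
        rw [hRlt _ i.isLt]
        congr 1
        show ((srsMap d r z i : ℤ) : ℝ) = w (i : ℕ)
        simp only [srsMap, hw]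
        split <;> simp [hσdef]
      rw [step1, hde, Finset.sum_range_succ]
      congr 1
      · apply Finset.sum_congr rfl
        intro i hi
        have h1 : i + 1 < d := by rw [hde]; have := Finset.mem_range.mp hi; omega
        have h2 : w i = (zint (i + 1) : ℝ) := by simp [hw, hzint, h1]
        rw [h2]
      · have h2 : ¬ (e + 1 < d) := by omega
        have : w e = ((-⌊σ⌋ : ℤ) : ℝ) := by simp only [hw, dif_neg h2]
        rw [this]
    have hβσ : β * σ = -((B 0 : ℤ) : ℝ) * (zint 0 : ℝ)
        + ∑ i ∈ range e, (R i - ((B (i + 1) : ℤ) : ℝ)) * (zint (i + 1) : ℝ) := by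
      rw [hσ, Finset.mul_sum, hde, Finset.sum_range_succ', add_comm]
      congr 1
      · rw [← mul_assoc, hR0]
      · apply Finset.sum_congr rfl
        intro i hi
        have h1 : i < d := by rw [hde]; have := Finset.mem_range.mp hi; omega
        rw [← mul_assoc]
        have h2 : β * R (i + 1) = R i - ((B (i + 1) : ℤ) : ℝ) := by
          have := hstep i h1; linarith
        rw [h2]
    refine ⟨B 0 * zint 0 + (∑ i ∈ range e, B (i + 1) * zint (i + 1)) - B d * ⌊σ⌋, ?_⟩
    have hfr : β * Int.fract σ = β * σ - β * ((⌊σ⌋ : ℤ) : ℝ) := by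
      rw [Int.fract]; ring
    rw [hτ, hRe, hfr, hβσ]
    push_cast
    have hsum : ∑ i ∈ range e, (R i - ((B (i + 1) : ℤ) : ℝ)) * (zint (i + 1) : ℝ)
        + ∑ i ∈ range e, ((B (i + 1) : ℤ) : ℝ) * (zint (i + 1) : ℝ)
        = ∑ i ∈ range e, R i * (zint (i + 1) : ℝ) := by
      rw [← Finset.sum_add_distrib]
      apply Finset.sum_congr rfl
      intros; ring
    linear_combination -hsum
  have part1 : ∀ z : Fin d → ℤ,
      Int.fract (∑ j, r j * ((srsMap d r z) j : ℝ))
        = betaT β (Int.fract (∑ j, r j * (z j : ℝ))) := by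
    intro z
    obtain ⟨m, hm⟩ := key z
    rw [hm, Int.fract_add_intCast]
    rfl
  -- degree of the minimal polynomial
  have hsumdeg : (∑ i : Fin (d+1), C (b i) * X^(i:ℕ)).degree < ((d+1 : ℕ) : WithBot ℕ) := by
    apply lt_of_le_of_lt (degree_sum_le _ _)
    rw [Finset.sup_lt_iff (by exact_mod_cast WithBot.bot_lt_coe (d+1))]
    intro i _
    apply lt_of_le_of_lt (degree_C_mul_X_pow_le _ _)
    exact_mod_cast i.isLt
  have hdeg : (minpoly ℤ β).degree = ((d+1:ℕ) : WithBot ℕ) := by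
    rw [hmin, degree_add_eq_left_of_degree_lt (by rw [degree_X_pow]; exact hsumdeg),
      degree_X_pow]
  have hkill : ∀ q : ℤ[X], q.degree < ((d+1 : ℕ) : WithBot ℕ) → aeval β q = 0 → q = 0 := by
    intro q hqd hqa
    by_contra hq
    have hinj : Function.Injective (algebraMap ℤ ℚ) := fun a c h => by
      rwa [algebraMap_int_eq, eq_intCast, eq_intCast, Int.cast_inj] at h
    have hq' : q.map (algebraMap ℤ ℚ) ≠ 0 := by
      rwa [Ne, Polynomial.map_eq_zero_iff hinj]
    have haev : aeval β (q.map (algebraMap ℤ ℚ)) = 0 := by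
      rwa [aeval_map_algebraMap]
    have hle := minpoly.degree_le_of_ne_zero ℚ β hq' haev
    rw [minpoly.isIntegrallyClosed_eq_field_fractions' ℚ hint,
      degree_map_eq_of_injective hinj, hdeg,
      degree_map_eq_of_injective hinj] at hle
    exact absurd (lt_of_le_of_lt hle hqd) (lt_irrefl _)
  -- the integer polynomials expressing R k in terms of powers of β
  set T : ℕ → ℤ[X] := fun k => X^(d-k) + ∑ m ∈ range (d-k), C (B (k+1+m)) * X^m
    with hTdef
  have hTcoeff : ∀ k l, (T k).coeff l
      = (if l = d - k then 1 else 0) + (if l < d - k then B (k+1+l) else 0) := by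
    intro k l
    rw [hTdef]
    rw [coeff_add, coeff_X_pow, aux_coeff_range]
  have hTd : T d = 1 := by
    rw [hTdef]
    simp
  have hTstep : ∀ k, k < d → T k = X * T (k+1) + C (B (k+1)) := by
    intro k hk
    obtain ⟨n, hn⟩ : ∃ n, d - k = n + 1 := ⟨d - (k+1), by omega⟩
    have hn' : d - (k+1) = n := by omega
    rw [hTdef]
    simp only [hn, hn']
    rw [Finset.sum_range_succ']
    have hsum : X * ∑ m ∈ range n, C (B (k+1+1+m)) * X^m
        = ∑ m ∈ range n, C (B (k+1+(m+1))) * X^(m+1) := by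
      rw [Finset.mul_sum]
      apply Finset.sum_congr rfl
      intro m _
      have hidx : k+1+1+m = k+1+(m+1) := by omega
      rw [hidx]; ring
    rw [← hsum]
    simp only [Nat.add_zero]
    ring
  have hTeval : ∀ k, k ≤ d → aeval β (T k) = R k := by
    have haux : ∀ j, j ≤ d → aeval β (T (d - j)) = R (d - j) := by
      intro j
      induction j with
      | zero => intro _; simp only [Nat.sub_zero, hTd, map_one, hRd]
      | succ i IH =>
        intro hij
        have hk : d - (i+1) < d := by omega
        have hk1 : d - (i+1) + 1 = d - i := by omega
        rw [hTstep _ hk, map_add, map_mul, aeval_X, aeval_C, hk1, IH (by omega),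
          algebraMap_int_eq, eq_intCast]
        have := hstep (d - (i+1)) hk
        rw [hk1] at this
        linarith
    intro k hk
    have : k = d - (d - k) := by omega
    rw [this]
    exact haux (d - k) (by omega)
  set zext : (Fin d → ℤ) → ℕ → ℤ := fun z j => if h : j < d then z ⟨j, h⟩ else 0
    with hzext
  have hσgen : ∀ z : Fin d → ℤ,
      (∑ j, r j * (z j : ℝ)) = ∑ k ∈ range d, R k * ((zext z k : ℤ) : ℝ) := by
    intro z
    rw [← Fin.sum_univ_eq_sum_range (fun k => R k * ((zext z k : ℤ) : ℝ)) d]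
    apply Finset.sum_congr rfl
    intro i _
    have h1 : zext z (i : ℕ) = z i := by simp [hzext, i.isLt]
    rw [hRlt _ i.isLt, h1]
  have hTtop : ∀ k, k < d → (T k).coeff (d - k) = 1 := by
    intro k hk
    rw [hTcoeff, if_pos rfl, if_neg (lt_irrefl _), add_zero]
  have hTzero : ∀ k j, k < j → j < d → (T j).coeff (d - k) = 0 := by
    intro k j h1 h2
    rw [hTcoeff, if_neg (by omega), if_neg (by omega), add_zero]
  have hTdeg : ∀ k, (T k).degree ≤ (d : ℕ) := by
    intro k
    rw [degree_le_iff_coeff_zero]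
    intro m hm
    have hm' : d < m := by exact_mod_cast hm
    rw [hTcoeff, if_neg (by omega), if_neg (by omega), add_zero]
  have hinj0 : ∀ (w : Fin d → ℤ) (n : ℤ), (∑ j, r j * (w j : ℝ)) = (n : ℝ) → w = 0 := by
    intro w n hw
    set q : ℤ[X] := (∑ k ∈ range d, C (zext w k) * T k) - C n with hqdef
    have hqd : q.degree < ((d+1:ℕ) : WithBot ℕ) := by
      have h1 : q.degree ≤ (d : ℕ) := by
        rw [hqdef]
        apply le_trans (degree_sub_le _ _)
        apply max_le
        · apply le_trans (degree_sum_le _ _)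
          apply Finset.sup_le
          intro k _
          refine le_trans (degree_mul_le _ _) ?_
          calc degree (C (zext w k)) + (T k).degree ≤ 0 + (d:ℕ) :=
                add_le_add degree_C_le (hTdeg k)
          _ = ((d:ℕ) : WithBot ℕ) := zero_add _
        · exact le_trans degree_C_le (by exact_mod_cast Nat.zero_le d)
      apply lt_of_le_of_lt h1
      exact_mod_cast Nat.lt_succ_self d
    have hqa : aeval β q = 0 := by
      rw [hqdef, map_sub, map_sum, aeval_C, algebraMap_int_eq, eq_intCast]
      have h1 : ∀ k ∈ range d, aeval β (C (zext w k) * T k)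
          = R k * ((zext w k : ℤ) : ℝ) := by
        intro k hk
        rw [map_mul, aeval_C, hTeval k (le_of_lt (mem_range.mp hk)),
          algebraMap_int_eq, eq_intCast, mul_comm]
      rw [Finset.sum_congr rfl h1, ← hσgen w, hw, sub_self]
    have hq0 : q = 0 := hkill q hqd hqa
    have hw0 : ∀ k, k < d → zext w k = 0 := by
      intro k
      induction k using Nat.strong_induction_on with
      | _ k IH =>
        intro hk
        have hc : q.coeff (d - k) = 0 := by rw [hq0]; simp
        rw [hqdef, coeff_sub, finset_sum_coeff, coeff_C,
          if_neg (by omega : ¬(d - k = 0)), sub_zero] at hc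
        rw [Finset.sum_eq_single k] at hc
        · rwa [coeff_C_mul, hTtop k hk, mul_one] at hc
        · intro j hj hne
          rw [coeff_C_mul]
          rcases lt_or_gt_of_ne hne with h | h
          · rw [IH j h (by omega), zero_mul]
          · rw [hTzero k j h (mem_range.mp hj), mul_zero]
        · intro hk'
          exact absurd (Finset.mem_range.mpr hk) hk'
    funext i
    have h2 := hw0 (i : ℕ) i.isLt
    have h3 : zext w (i : ℕ) = w i := by simp [hzext, i.isLt]
    rw [h3] at h2
    simpa using h2
  have hinjOn : Set.InjOn (fun z : Fin d → ℤ => Int.fract (∑ j, r j * (z j : ℝ)))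
      Set.univ := by
    intro z1 _ z2 _ h
    simp only at h
    set σ1 := ∑ j, r j * ((z1 j : ℤ) : ℝ) with hσ1
    set σ2 := ∑ j, r j * ((z2 j : ℤ) : ℝ) with hσ2
    have hfr : σ1 - (⌊σ1⌋ : ℝ) = σ2 - (⌊σ2⌋ : ℝ) := by
      rw [← Int.self_sub_floor, ← Int.self_sub_floor] at h
      exact h
    have hsub : (∑ j, r j * (((z1 - z2) j : ℤ) : ℝ)) = ((⌊σ1⌋ - ⌊σ2⌋ : ℤ) : ℝ) := by
      push_cast [Pi.sub_apply]
      have hss : (∑ j, r j * ((z1 j : ℝ) - (z2 j : ℝ))) = σ1 - σ2 := by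
        rw [hσ1, hσ2, ← Finset.sum_sub_distrib]
        exact Finset.sum_congr rfl fun j _ => mul_sub _ _ _
      rw [hss]
      linarith
    have hz : z1 - z2 = 0 := hinj0 (z1 - z2) (⌊σ1⌋ - ⌊σ2⌋) hsub
    exact sub_eq_zero.mp hz
  -- membership of values in ℤ[β]
  have hclosR : ∀ k, k ≤ d → R k ∈ Subring.closure ({β} : Set ℝ) := by
    intro k hk
    rw [← hTeval k hk]
    have h1 : aeval β (T k) ∈ Algebra.adjoin ℤ ({β} : Set ℝ) := by
      rw [Algebra.adjoin_singleton_eq_range_aeval]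
      exact ⟨T k, rfl⟩
    rw [Algebra.adjoin_int] at h1
    exact h1
  have hmapsTo : ∀ z : Fin d → ℤ,
      Int.fract (∑ j, r j * (z j : ℝ)) ∈ Subring.closure ({β} : Set ℝ) := by
    intro z
    have hσm : (∑ j, r j * (z j : ℝ)) ∈ Subring.closure ({β} : Set ℝ) := by
      rw [hσgen z]
      apply sum_mem
      intro k hk
      exact mul_mem (hclosR k (le_of_lt (Finset.mem_range.mp hk))) (intCast_mem _ _)
    rw [← Int.self_sub_floor]
    exact sub_mem hσm (intCast_mem _ _)
  -- representation of elements of ℤ[β]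
  have hrep : ∀ x : ℝ, x ∈ Subring.closure ({β} : Set ℝ)
      → ∃ c : ℕ → ℤ, x = ∑ m ∈ range (d+1), (c m : ℝ) * β ^ m := by
    intro x hx
    have hx' : x ∈ Algebra.adjoin ℤ ({β} : Set ℝ) := by
      rw [Algebra.adjoin_int]
      exact hx
    rw [Algebra.adjoin_singleton_eq_range_aeval] at hx'
    obtain ⟨p, hp0⟩ := hx'
    have hp : aeval β p = x := hp0
    have hmono : (minpoly ℤ β).Monic := minpoly.monic hint
    set p' := p %ₘ (minpoly ℤ β) with hp'def
    have hdlt : p'.degree < ((d+1:ℕ) : WithBot ℕ) := by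
      rw [← hdeg]
      exact degree_modByMonic_lt p hmono
    have hnat : p'.natDegree < d + 1 := by
      rcases eq_or_ne p' 0 with h | h
      · rw [h, natDegree_zero]; omega
      · rwa [← natDegree_lt_iff_degree_lt h] at hdlt
    have heq : aeval β p' = x := by
      rw [hp'def, modByMonic_eq_sub_mul_div p (minpoly ℤ β), map_sub, map_mul,
        minpoly.aeval, zero_mul, sub_zero, hp]
    refine ⟨fun m => p'.coeff m, ?_⟩
    rw [← heq, aeval_eq_sum_range' hnat]
    apply Finset.sum_congr rfl
    intro m _
    rw [zsmul_eq_mul]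
  -- the set of reachable values
  set Mem : ℝ → Prop := fun y => ∃ (wf : ℕ → ℤ) (n : ℤ),
    y = (∑ k ∈ range d, R k * (wf k : ℝ)) + n with hMemdef
  have hM0 : ∀ n : ℤ, Mem (n : ℝ) := fun n => ⟨0, n, by simp⟩
  have hMadd : ∀ y1 y2, Mem y1 → Mem y2 → Mem (y1 + y2) := by
    rintro y1 y2 ⟨w1, n1, rfl⟩ ⟨w2, n2, rfl⟩
    refine ⟨w1 + w2, n1 + n2, ?_⟩
    have h1 : ∑ k ∈ range d, R k * (((w1 + w2) k : ℤ) : ℝ)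
        = ∑ k ∈ range d, (R k * (w1 k : ℝ) + R k * (w2 k : ℝ)) := by
      apply Finset.sum_congr rfl
      intro k _
      push_cast [Pi.add_apply]
      ring
    rw [h1, Finset.sum_add_distrib]
    push_cast
    ring
  have hMsmul : ∀ (c : ℤ) (y : ℝ), Mem y → Mem ((c : ℝ) * y) := by
    rintro c y ⟨w1, n1, rfl⟩
    refine ⟨fun k => c * w1 k, c * n1, ?_⟩
    have h1 : ∑ k ∈ range d, R k * ((c * w1 k : ℤ) : ℝ)
        = ∑ k ∈ range d, (c : ℝ) * (R k * (w1 k : ℝ)) := by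
      apply Finset.sum_congr rfl
      intro k _
      push_cast
      ring
    rw [h1, ← Finset.mul_sum]
    push_cast
    ring
  have hMR : ∀ k, k < d → Mem (R k) := by
    intro k hk
    refine ⟨fun j => if j = k then 1 else 0, 0, ?_⟩
    rw [Int.cast_zero, add_zero, Finset.sum_eq_single k]
    · simp
    · intro j _ hne
      simp [hne]
    · intro hk'
      exact absurd (Finset.mem_range.mpr hk) hk'
  have hMsum : ∀ (s : Finset ℕ) (f : ℕ → ℝ), (∀ i ∈ s, Mem (f i))
      → Mem (∑ i ∈ s, f i) := by
    intro s
    induction s using Finset.induction_on with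
    | empty => intro f _; rw [Finset.sum_empty]; simpa using hM0 0
    | insert _ _ ha IH =>
      rename_i a s'
      intro f hf
      rw [Finset.sum_insert ha]
      exact hMadd _ _ (hf a (Finset.mem_insert_self _ _))
        (IH f fun i hi => hf i (Finset.mem_insert_of_mem hi))
  have hMpow : ∀ m, m ≤ d → Mem (β ^ m) := by
    intro m
    induction m using Nat.strong_induction_on with
    | _ m IH =>
      intro hm
      rcases Nat.eq_zero_or_pos m with h0 | h1
      · rw [h0, pow_zero]
        simpa using hM0 1
      · have hkd : d - m < d := by omega
        have hdk : d - (d - m) = m := by omega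
        have hval : R (d - m) = β ^ m + ∑ i ∈ range m, ((B (d - m + 1 + i) : ℤ) : ℝ) * β ^ i := by
          rw [← hTeval (d - m) (by omega), hTdef]
          simp only [hdk]
          rw [map_add, map_sum, aeval_X_pow]
          congr 1
          apply Finset.sum_congr rfl
          intro i _
          rw [map_mul, aeval_C, aeval_X_pow, algebraMap_int_eq, eq_intCast]
        have h2 : β ^ m = R (d - m)
            + ((-1 : ℤ) : ℝ) * ∑ i ∈ range m, ((B (d - m + 1 + i) : ℤ) : ℝ) * β ^ i := by
          push_cast
          linarith
        rw [h2]
        apply hMadd _ _ (hMR _ hkd)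
        apply hMsmul
        apply hMsum
        intro i hi
        exact hMsmul _ _ (IH i (Finset.mem_range.mp hi) (by have := Finset.mem_range.mp hi; omega))
  -- surjectivity
  have hsurj : Set.SurjOn (fun z : Fin d → ℤ => Int.fract (∑ j, r j * (z j : ℝ)))
      Set.univ ({x : ℝ | x ∈ Subring.closure ({β} : Set ℝ)} ∩ Set.Ico 0 1) := by
    intro x hx
    obtain ⟨c, hc⟩ := hrep x hx.1
    have hxM : Mem x := by
      rw [hc]
      apply hMsum
      intro m hm
      exact hMsmul _ _ (hMpow m (by have := Finset.mem_range.mp hm; omega))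
    obtain ⟨wf, n, hx'⟩ := hxM
    refine ⟨fun i : Fin d => wf (i : ℕ), Set.mem_univ _, ?_⟩
    show Int.fract (∑ j, r j * ((wf (j : ℕ) : ℤ) : ℝ)) = x
    rw [hσgen]
    have h1 : ∑ k ∈ range d, R k * ((zext (fun i : Fin d => wf (i : ℕ)) k : ℤ) : ℝ)
        = ∑ k ∈ range d, R k * (wf k : ℝ) := by
      apply Finset.sum_congr rfl
      intro k hk
      have := Finset.mem_range.mp hk
      simp [hzext, this]
    rw [h1]
    have h2 : ∑ k ∈ range d, R k * (wf k : ℝ) = x + ((-n : ℤ) : ℝ) := by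
      push_cast
      linarith [hx']
    rw [h2, Int.fract_add_intCast]
    exact Int.fract_eq_self.mpr ⟨hx.2.1, hx.2.2⟩
  refine ⟨part1, ?_, hinjOn, hsurj⟩
  intro z _
  exact ⟨hmapsTo z, Int.fract_nonneg _, Int.fract_lt_one _⟩
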